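/- Let d ≥ 4 be even. There is a constant C₀ > 0 independent of q such that for every power q of an odd prime and every subset E ⊂ F_q^d, ‖E ∗ K̂‖_{L^∞(C,σ)} ≤ C₀ |E| / q^{d−1}, i.e., max_{x∈C} |E ∗ K̂(x)| ≤ C₀ |E| q^{−(d−1)}. -/

import Mathlib

open Finset MeasureTheory
open scoped ENNReal

namespace ConeFF

variable (F : Type) [Field F] [Fintype F] [DecidableEq F]

/-- The cone `C = {x ∈ F^d : x₁² + ⋯ + x_{d-2}² = x_{d-1} x_d}` (0-indexed). -/
def cone (d : ℕ) (hd : 3 ≤ d) : Finset (Fin d → F) :=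
  Finset.univ.filter fun x =>
    (∑ i ∈ Finset.univ.filter (fun i : Fin d => (i : ℕ) < d - 2), x i ^ 2) =
      x ⟨d - 2, by omega⟩ * x ⟨d - 1, by omega⟩

/-- The quadratic form `Γ(ξ) = ξ₁² + ⋯ + ξ_{d-2}² − 4 ξ_{d-1} ξ_d`. -/
def gammaForm (d : ℕ) (hd : 3 ≤ d) (ξ : Fin d → F) : F :=
  (∑ i ∈ Finset.univ.filter (fun i : Fin d => (i : ℕ) < d - 2), ξ i ^ 2) -
    4 * ξ ⟨d - 2, by omega⟩ * ξ ⟨d - 1, by omega⟩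

/-- Indicator function of a finite set, with values in `ℂ`. -/
def ind {V : Type} [DecidableEq V] (E : Finset V) : V → ℂ :=
  fun x => if x ∈ E then 1 else 0

/-- Convolution with respect to the normalized counting measure `dx`. -/
noncomputable def conv (d : ℕ) (f g : (Fin d → F) → ℂ) : (Fin d → F) → ℂ :=
  fun y => ((Fintype.card F : ℂ) ^ d)⁻¹ * ∑ x, f (y - x) * g x

/-- The averaging operator `f ∗ σ` over the cone. -/
noncomputable def avg (d : ℕ) (hd : 3 ≤ d) (f : (Fin d → F) → ℂ) : (Fin d → F) → ℂ :=
  fun y => ((cone F d hd).card : ℂ)⁻¹ * ∑ x ∈ cone F d hd, f (y - x)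

/-- Inverse Fourier transform `f^∨(m) = q^{-d} ∑_x χ(m·x) f(x)`. -/
noncomputable def invFT (d : ℕ) (χ : AddChar F ℂ) (f : (Fin d → F) → ℂ)
    (m : Fin d → F) : ℂ :=
  ((Fintype.card F : ℂ) ^ d)⁻¹ * ∑ x, χ (dotProduct m x) * f x

/-- Fourier transform `ĝ(x) = ∑_m χ(−m·x) g(m)` on the dual space. -/
noncomputable def ft (d : ℕ) (χ : AddChar F ℂ) (g : (Fin d → F) → ℂ)
    (x : Fin d → F) : ℂ :=
  ∑ m, χ (-(dotProduct m x)) * g m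

/-- `σ^∨(m) = |C|⁻¹ ∑_{x∈C} χ(m·x)`. -/
noncomputable def sigmaInv (d : ℕ) (hd : 3 ≤ d) (χ : AddChar F ℂ) (m : Fin d → F) : ℂ :=
  ((cone F d hd).card : ℂ)⁻¹ * ∑ x ∈ cone F d hd, χ (dotProduct m x)

/-- `K(m) = σ^∨(m) − δ₀(m)`. -/
noncomputable def Kfun (d : ℕ) (hd : 3 ≤ d) (χ : AddChar F ℂ) (m : Fin d → F) : ℂ :=
  sigmaInv F d hd χ m - if m = 0 then 1 else 0

/-- `M(m) = C^∨(m) − (|C|/q^d) δ₀(m)`. -/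
noncomputable def Mfun (d : ℕ) (hd : 3 ≤ d) (χ : AddChar F ℂ) (m : Fin d → F) : ℂ :=
  invFT F d χ (ind (cone F d hd)) m -
    if m = 0 then ((cone F d hd).card : ℂ) / (Fintype.card F : ℂ) ^ d else 0

/-- `L^p(C,σ)` norm (for finite `p`), with `σ` the normalized surface measure. -/
noncomputable def coneLpNorm (d : ℕ) (hd : 3 ≤ d) (p : ℝ) (h : (Fin d → F) → ℂ) : ℝ :=
  (((cone F d hd).card : ℝ)⁻¹ * ∑ x ∈ cone F d hd, ‖h x‖ ^ p) ^ (1 / p)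

/-- `L^p(F_q^d, dx)` norm (for finite `p`), with `dx` the normalized counting measure. -/
noncomputable def spaceLpNorm (d : ℕ) (p : ℝ) (f : (Fin d → F) → ℂ) : ℝ :=
  (((Fintype.card F : ℝ) ^ d)⁻¹ * ∑ x, ‖f x‖ ^ p) ^ (1 / p)




lemma sum_filter_lt {M : Type*} [AddCommMonoid M] (d : ℕ) (hd : 3 ≤ d) (g : Fin d → M) :
    ∑ i ∈ Finset.univ.filter (fun i : Fin d => (i : ℕ) < d - 2), g i =
      ∑ j : Fin (d - 2), g ⟨j, by omega⟩ := by
  refine Finset.sum_bij' (fun i hi => (⟨i, (Finset.mem_filter.1 hi).2⟩ : Fin (d - 2)))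
    (fun j _ => (⟨(j : ℕ), by omega⟩ : Fin d)) ?_ ?_ ?_ ?_ ?_
  · intro i hi; exact Finset.mem_univ _
  · intro j hj
    simp only [Finset.mem_filter, Finset.mem_univ, true_and]
    exact j.2
  · intro i hi; ext; rfl
  · intro j hj; ext; rfl
  · intro i hi; rfl


lemma sum_char_dot (d : ℕ) (χ : AddChar F ℂ) (hχ : ∃ a, χ a ≠ 1) (z : Fin d → F) :
    ∑ m : Fin d → F, χ (dotProduct m z) =
      if z = 0 then ((Fintype.card F : ℂ)) ^ d else 0 := by
  split_ifs with hz
  · subst hz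
    simp only [dotProduct_zero, AddChar.map_zero_eq_one]
    simp [Finset.card_univ, Fintype.card_fun]
  · set ψ : AddChar (Fin d → F) ℂ :=
      χ.compAddMonoidHom
        { toFun := fun m => dotProduct m z
          map_zero' := zero_dotProduct z
          map_add' := fun a b => add_dotProduct a b z } with hψ
    have hne : ψ ≠ 0 := by
      rw [AddChar.ne_zero_iff]
      obtain ⟨a, ha⟩ := hχ
      obtain ⟨j, hj⟩ := Function.ne_iff.1 hz
      refine ⟨Pi.single j (a * (z j)⁻¹), ?_⟩
      simp only [hψ, AddChar.compAddMonoidHom_apply, AddMonoidHom.coe_mk,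
        ZeroHom.coe_mk, single_dotProduct]
      rwa [mul_assoc, inv_mul_cancel₀ hj, mul_one]
    have := AddChar.sum_eq_zero_iff_ne_zero.2 hne
    simpa [hψ] using this

/-- The Fourier transform of `K`. -/
lemma ft_K (d : ℕ) (hd : 3 ≤ d) (χ : AddChar F ℂ) (hχ : ∃ a, χ a ≠ 1) (x : Fin d → F) :
    ft F d χ (Kfun F d hd χ) x =
      ((Fintype.card F : ℂ)) ^ d * ((cone F d hd).card : ℂ)⁻¹ * ind (cone F d hd) x - 1 := by
  classical
  unfold ft Kfun sigmaInv
  simp_rw [mul_sub]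
  rw [Finset.sum_sub_distrib]
  have hterm2 : ∑ m : Fin d → F, χ (-(dotProduct m x)) * (if m = 0 then (1:ℂ) else 0)
      = 1 := by
    rw [Finset.sum_eq_single (0 : Fin d → F)]
    · simp
    · intro b _ hb; simp [hb]
    · intro h; exact absurd (Finset.mem_univ _) h
  rw [hterm2]
  congr 1
  have hswap : ∀ m : Fin d → F,
      χ (-(dotProduct m x)) * (((cone F d hd).card : ℂ)⁻¹ *
        ∑ y ∈ cone F d hd, χ (dotProduct m y)) =
      ((cone F d hd).card : ℂ)⁻¹ * ∑ y ∈ cone F d hd, χ (dotProduct m (y - x)) := by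
    intro m
    rw [mul_left_comm]
    congr 1
    rw [Finset.mul_sum]
    refine Finset.sum_congr rfl fun y _ => ?_
    rw [← AddChar.map_add_eq_mul, dotProduct_sub]
    ring_nf
  simp_rw [hswap]
  rw [← Finset.mul_sum, Finset.sum_comm]
  have hinner : ∀ y : Fin d → F, ∑ m : Fin d → F, χ (dotProduct m (y - x)) =
      if y = x then ((Fintype.card F : ℂ)) ^ d else 0 := by
    intro y
    rw [sum_char_dot F d χ hχ]
    congr 1
    simp [sub_eq_zero]
  simp_rw [hinner]
  rw [Finset.sum_ite_eq' (cone F d hd) x fun _ => ((Fintype.card F : ℂ)) ^ d]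
  unfold ind
  split_ifs <;> ring


lemma cone_card_lower (d : ℕ) (hd : 3 ≤ d) :
    Fintype.card F ^ (d - 2) * (Fintype.card F - 1) ≤ (cone F d hd).card := by
  classical
  set φ : ((Fin (d - 2) → F) × Fˣ) → (Fin d → F) := fun p i =>
    if h : (i : ℕ) < d - 2 then p.1 ⟨i, h⟩
    else if (i : ℕ) = d - 2 then (p.2 : F)
    else (∑ j : Fin (d - 2), p.1 j ^ 2) * ((p.2 : F))⁻¹ with hφ
  have hmem : ∀ p : (Fin (d - 2) → F) × Fˣ, φ p ∈ cone F d hd := by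
    intro p
    simp only [cone, Finset.mem_filter, Finset.mem_univ, true_and]
    rw [sum_filter_lt d hd]
    have h1 : ∀ j : Fin (d - 2), φ p ⟨j, by omega⟩ = p.1 j := by
      intro j
      simp only [hφ]
      rw [dif_pos j.2]
    have h2 : φ p ⟨d - 2, by omega⟩ = (p.2 : F) := by
      simp only [hφ]
      rw [dif_neg (by omega)]; simp
    have h3 : φ p ⟨d - 1, by omega⟩ = (∑ j : Fin (d - 2), p.1 j ^ 2) * ((p.2 : F))⁻¹ := by
      simp only [hφ]
      rw [dif_neg (by omega), if_neg (by omega)]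
    rw [h2, h3]
    simp_rw [h1]
    rw [mul_comm ((p.2 : F)), mul_assoc, inv_mul_cancel₀ (Units.ne_zero p.2), mul_one]
  have hinj : Function.Injective φ := by
    intro p q hpq
    have h2 : ∀ r : (Fin (d - 2) → F) × Fˣ, φ r ⟨d - 2, by omega⟩ = (r.2 : F) := by
      intro r; simp only [hφ]; rw [dif_neg (by omega)]; simp
    have hu : p.2 = q.2 := by
      have := congrFun hpq ⟨d - 2, by omega⟩
      rw [h2 p, h2 q] at this
      exact Units.ext this
    have hv : p.1 = q.1 := by
      funext j
      have := congrFun hpq ⟨j, by omega⟩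
      simp only [hφ] at this
      rwa [dif_pos j.2, dif_pos j.2] at this
    exact Prod.ext hv hu
  calc Fintype.card F ^ (d - 2) * (Fintype.card F - 1)
      = Fintype.card ((Fin (d - 2) → F) × Fˣ) := by
        rw [Fintype.card_prod, Fintype.card_fun, Fintype.card_units, Fintype.card_fin]
    _ ≤ (cone F d hd).card := by
        rw [← Finset.card_univ]
        exact Finset.card_le_card_of_injOn φ (fun p _ => hmem p) (hinj.injOn)

/-- `‖E ∗ K̂‖_{L^∞(C,σ)} ≲ |E| q^{-(d-1)}` for even `d ≥ 4`. -/
theorem statement9 (d : ℕ) (hd : 4 ≤ d) (hde : Even d) :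
    ∃ C₀ : ℝ, 0 < C₀ ∧
      ∀ (F : Type) [Field F] [Fintype F] [DecidableEq F], ringChar F ≠ 2 →
        ∀ χ : AddChar F ℂ, (∃ a, χ a ≠ 1) →
          ∀ E : Finset (Fin d → F), ∀ x ∈ cone F d (by omega),
            ‖conv F d (ind E) (ft F d χ (Kfun F d (by omega) χ)) x‖ ≤
              C₀ * (E.card : ℝ) / (Fintype.card F : ℝ) ^ (d - 1) := by
  refine ⟨3, by norm_num, ?_⟩
  intro F _ _ _ _ χ hχ E x _
  classical
  have h3 : 3 ≤ d := by omega
  set q : ℝ := (Fintype.card F : ℝ) with hq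
  have hq2 : (2:ℝ) ≤ q := by
    have := Fintype.one_lt_card (α := F)
    rw [hq]; exact_mod_cast this
  have hq0 : (0:ℝ) < q := by linarith
  set Cn : Finset (Fin d → F) := cone F d h3 with hCn
  set c : ℕ := Cn.card with hc
  have hN : ((Fintype.card F : ℂ)) ^ d ≠ 0 := by
    apply pow_ne_zero
    exact_mod_cast (Fintype.card_ne_zero (α := F))
  have hft : ∀ m : Fin d → F, ft F d χ (Kfun F d h3 χ) m =
      ((Fintype.card F : ℂ)) ^ d * ((c : ℕ) : ℂ)⁻¹ * ind Cn m - 1 :=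
    ft_K F d h3 χ hχ
  have hconv : conv F d (ind E) (ft F d χ (Kfun F d h3 χ)) x
      = ((c : ℕ) : ℂ)⁻¹ * (∑ m, ind E (x - m) * ind Cn m)
        - ((Fintype.card F : ℂ) ^ d)⁻¹ * (∑ m, ind E (x - m)) := by
    unfold conv
    simp only [hft]
    have hsplit : ∀ m : Fin d → F,
        ind E (x - m) * ((Fintype.card F : ℂ) ^ d * ((c : ℕ) : ℂ)⁻¹ * ind Cn m - 1)
        = (Fintype.card F : ℂ) ^ d * (((c : ℕ) : ℂ)⁻¹ * (ind E (x - m) * ind Cn m))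
          - ind E (x - m) := by intro m; ring
    simp_rw [hsplit]
    rw [Finset.sum_sub_distrib, ← Finset.mul_sum, mul_sub, ← mul_assoc,
      inv_mul_cancel₀ hN, one_mul, Finset.mul_sum, ← Finset.mul_sum]
  -- norm bounds on the two sums
  have hind_norm : ∀ z : Fin d → F, ‖ind E z‖ = if z ∈ E then (1:ℝ) else 0 := by
    intro z; unfold ind; split_ifs <;> simp
  have hsumE : ∑ m : Fin d → F, ‖ind E (x - m)‖ = (E.card : ℝ) := by
    rw [Fintype.sum_bijective (Equiv.subLeft x) (Equiv.bijective _)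
      (fun m => ‖ind E (x - m)‖) (fun z => ‖ind E z‖) (fun m => rfl)]
    simp_rw [hind_norm]
    rw [Finset.sum_ite_mem, Finset.univ_inter, Finset.sum_const, nsmul_eq_mul, mul_one]
  have hS1 : ‖∑ m : Fin d → F, ind E (x - m) * ind Cn m‖ ≤ (E.card : ℝ) := by
    calc ‖∑ m : Fin d → F, ind E (x - m) * ind Cn m‖
        ≤ ∑ m : Fin d → F, ‖ind E (x - m) * ind Cn m‖ := norm_sum_le _ _
      _ ≤ ∑ m : Fin d → F, ‖ind E (x - m)‖ := by
          refine Finset.sum_le_sum fun m _ => ?_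
          rw [norm_mul]
          have : ‖ind Cn m‖ ≤ 1 := by unfold ind; split_ifs <;> simp
          calc ‖ind E (x - m)‖ * ‖ind Cn m‖ ≤ ‖ind E (x - m)‖ * 1 := by
                exact mul_le_mul_of_nonneg_left this (norm_nonneg _)
            _ = ‖ind E (x - m)‖ := mul_one _
      _ = (E.card : ℝ) := hsumE
  have hS2 : ‖∑ m : Fin d → F, ind E (x - m)‖ ≤ (E.card : ℝ) := by
    calc ‖∑ m : Fin d → F, ind E (x - m)‖ ≤ ∑ m : Fin d → F, ‖ind E (x - m)‖ :=
        norm_sum_le _ _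
      _ = (E.card : ℝ) := hsumE
  -- cardinality lower bound
  have hclow : q ^ (d - 2) * (q - 1) ≤ (c : ℝ) := by
    have h := cone_card_lower F d h3
    have h1 : (1 : ℕ) ≤ Fintype.card F := Fintype.card_pos
    have := (Nat.cast_le (α := ℝ)).2 h
    push_cast [Nat.cast_sub h1] at this
    rw [hq]
    convert this using 2 <;> rw [hCn] at * <;> rfl
  have hq1pos : (0:ℝ) < q - 1 := by linarith
  have hcpos : (0:ℝ) < (c : ℝ) := by
    have : (0:ℝ) < q ^ (d - 2) * (q - 1) := by positivity
    linarith
  have hpow : q ^ (d - 1) = q ^ (d - 2) * q := by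
    have : d - 1 = (d - 2) + 1 := by omega
    rw [this, pow_succ]
  have h2c : q ^ (d - 1) ≤ 2 * (c : ℝ) := by
    rw [hpow]
    nlinarith [hclow, pow_pos hq0 (d - 2)]
  have hPpos : (0:ℝ) < q ^ (d - 1) := pow_pos hq0 _
  have hcinv : ((c : ℝ))⁻¹ ≤ 2 / q ^ (d - 1) := by
    rw [inv_eq_one_div, div_le_div_iff₀ hcpos hPpos]
    linarith
  have hNinv : (q ^ d)⁻¹ ≤ 1 / q ^ (d - 1) := by
    rw [inv_eq_one_div, div_le_div_iff₀ (pow_pos hq0 _) hPpos]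
    have : q ^ (d - 1) ≤ q ^ d := pow_le_pow_right₀ (by linarith) (by omega)
    linarith
  have hEnn : (0:ℝ) ≤ (E.card : ℝ) := Nat.cast_nonneg _
  refine le_trans (le_of_eq (congrArg norm hconv)) ?_
  calc ‖((c : ℕ) : ℂ)⁻¹ * (∑ m, ind E (x - m) * ind Cn m)
        - ((Fintype.card F : ℂ) ^ d)⁻¹ * (∑ m, ind E (x - m))‖
      ≤ ‖((c : ℕ) : ℂ)⁻¹ * (∑ m, ind E (x - m) * ind Cn m)‖
        + ‖((Fintype.card F : ℂ) ^ d)⁻¹ * (∑ m, ind E (x - m))‖ := norm_sub_le _ _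
    _ = ((c : ℝ))⁻¹ * ‖∑ m : Fin d → F, ind E (x - m) * ind Cn m‖
        + (q ^ d)⁻¹ * ‖∑ m : Fin d → F, ind E (x - m)‖ := by
          rw [norm_mul, norm_mul, norm_inv, norm_inv, norm_pow, Complex.norm_natCast,
            Complex.norm_natCast, hq]
    _ ≤ (2 / q ^ (d - 1)) * (E.card : ℝ) + (1 / q ^ (d - 1)) * (E.card : ℝ) := by
          gcongr <;> first | exact hS1 | exact hS2 | exact hcinv | exact hNinv | positivity
    _ = 3 * (E.card : ℝ) / q ^ (d - 1) := by ring

end ConeFF
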